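/- Let P be a locally finite poset with weak rank function ρ and let g be an element of the incidence algebra with g_{x,x} = 1 and deg g_{x,y} < ρ(x,y)/2 for x < y. Then there exist unique functions H and d in the incidence algebra with deg-bounds deg ≤ ρ such that: d_{x,x} = 1; I(H) = tH + (1-t)δ; I(d) = d; and H = d·g (convolution). Moreover d satisfies d_{x,y} = t·S_{ρ(x,y)-1}(Σ_{x≤z<y} d_{x,z} g_{z,y}) for x < y. -/

import Mathlib

open Polynomial

/-- `Spoly n f = (Iₙ(f) - f)/(t-1)` where `Iₙ(f)(t) = tⁿ f(1/t)` is the reversal. -/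
noncomputable def Spoly {R : Type*} [CommRing R] (n : ℕ) (f : R[X]) : R[X] :=
  (reflect n f - f) /ₘ (X - C 1)

/-- `H`, `d` form a Chow / Chow-derangement pair for `g` in the incidence algebra of
the locally finite poset `P` with weak rank function `ρ`: both have degree bounded
by `ρ`, `d_{x,x} = 1`, `I(H) = tH + (1-t)δ`, `I(d) = d`, and `H = d·g`
(convolution). -/
def ChowPairOn {P : Type*} [PartialOrder P] [DecidableEq P] [LocallyFiniteOrder P]
    {R : Type*} [CommRing R] (ρ : P → P → ℕ) (g H d : P → P → R[X]) : Prop :=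
  (∀ x y : P, x ≤ y → (H x y).natDegree ≤ ρ x y ∧ (d x y).natDegree ≤ ρ x y) ∧
  (∀ x : P, d x x = 1) ∧
  (∀ x y : P, x ≤ y →
    reflect (ρ x y) (H x y) = X * H x y + (if x = y then (1 : R[X]) - X else 0)) ∧
  (∀ x y : P, x ≤ y → reflect (ρ x y) (d x y) = d x y) ∧
  (∀ x y : P, x ≤ y → H x y = ∑ z ∈ Finset.Icc x y, d x z * g z y)

namespace Stmt17Aux

section PolyLemmas

variable {R : Type*} [CommRing R]

lemma reflect_reflect (n : ℕ) (f : R[X]) : reflect n (reflect n f) = f := by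
  ext i
  simp [coeff_reflect, revAt_invol]

lemma reflect_sub' (n : ℕ) (f g : R[X]) : reflect n (f - g) = reflect n f - reflect n g := by
  ext i
  simp [coeff_reflect]

lemma natDegree_reflect_le {n : ℕ} {f : R[X]} (h : f.natDegree ≤ n) :
    (reflect n f).natDegree ≤ n := by
  rw [natDegree_le_iff_coeff_eq_zero]
  intro m hm
  rw [coeff_reflect, revAt_eq_self_of_lt hm]
  exact coeff_eq_zero_of_natDegree_lt (lt_of_le_of_lt h hm)

lemma reflect_succ_of_natDegree_le {n : ℕ} {f : R[X]} (h : f.natDegree ≤ n) :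
    reflect (n + 1) f = X * reflect n f := by
  ext i
  rw [coeff_reflect]
  cases i with
  | zero =>
    rw [mul_coeff_zero, coeff_X_zero, zero_mul]
    have : revAt (n + 1) 0 = n + 1 := revAt_zero _
    rw [this]
    exact coeff_eq_zero_of_natDegree_lt (lt_of_le_of_lt h (Nat.lt_succ_self n))
  | succ j =>
    rw [coeff_X_mul, coeff_reflect]
    by_cases hj : j ≤ n
    · rw [revAt_le hj, revAt_le (by omega : j + 1 ≤ n + 1)]
      congr 1
      omega
    · rw [revAt_eq_self_of_lt (by omega), revAt_eq_self_of_lt (by omega)]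
      rw [coeff_eq_zero_of_natDegree_lt (by omega), coeff_eq_zero_of_natDegree_lt (by omega)]

lemma eval_one_reflect (n : ℕ) (f : R[X]) : (reflect n f).eval 1 = f.eval 1 := by
  induction f using Polynomial.induction_on' with
  | add p q hp hq => rw [reflect_add, eval_add, eval_add, hp, hq]
  | monomial i a =>
    rw [← C_mul_X_pow_eq_monomial, reflect_C_mul, reflect_monomial]
    simp

lemma spoly_spec (n : ℕ) (f : R[X]) :
    (X - C 1) * Spoly n f = reflect n f - f := by
  have h := modByMonic_add_div (reflect n f - f) (X - C (1 : R))
  rw [modByMonic_X_sub_C_eq_C_eval] at h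
  have h0 : (reflect n f - f).eval 1 = 0 := by
    rw [eval_sub, eval_one_reflect, sub_self]
  rw [h0, C_0, zero_add] at h
  exact h

lemma natDegree_spoly_le [Nontrivial R] {n : ℕ} {f : R[X]} (h : f.natDegree ≤ n) :
    (Spoly n f).natDegree ≤ n - 1 := by
  have hd : (reflect n f - f).natDegree ≤ n :=
    le_trans (natDegree_sub_le _ _) (max_le (natDegree_reflect_le h) h)
  rw [Spoly, natDegree_divByMonic _ (monic_X_sub_C (1 : R)), natDegree_X_sub_C]
  omega

end PolyLemmas

section Poset

variable {P : Type*} [PartialOrder P] [DecidableEq P] [LocallyFiniteOrder P]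
variable {R : Type*} [CommRing R]

/-- Fuel-based recursion computing the Chow-derangement function. -/
noncomputable def chowDAux (ρ : P → P → ℕ) (g : P → P → R[X]) : ℕ → P → P → R[X]
  | 0 => fun _ _ => 1
  | n + 1 => fun x y =>
      if x = y then 1
      else X * Spoly (ρ x y - 1) (∑ z ∈ Finset.Ico x y, chowDAux ρ g n x z * g z y)

variable (ρ : P → P → ℕ) (g : P → P → R[X])

/-- The Chow-derangement function. -/
noncomputable def chowD (x y : P) : R[X] := chowDAux ρ g (ρ x y + 1) x y

/-- The truncated convolution `F = Σ_{x ≤ z < y} d_{x,z} g_{z,y}`. -/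
noncomputable def chowF (x y : P) : R[X] :=
  ∑ z ∈ Finset.Ico x y, chowD ρ g x z * g z y

/-- The Chow function `H = d · g`. -/
noncomputable def chowH (x y : P) : R[X] :=
  ∑ z ∈ Finset.Icc x y, chowD ρ g x z * g z y

variable (hρpos : ∀ x y : P, 0 < ρ x y ↔ x < y)
variable (hρadd : ∀ x z y : P, x ≤ z → z ≤ y → ρ x y = ρ x z + ρ z y)

include hρpos hρadd in
lemma chowDAux_step :
    ∀ n : ℕ, ∀ x y : P, x ≤ y → ρ x y < n →
      chowDAux ρ g n x y = chowDAux ρ g (n + 1) x y := by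
  intro n
  induction n with
  | zero => intro x y _ h; omega
  | succ n ih =>
    intro x y hxy h
    by_cases hxy' : x = y
    · simp [chowDAux, hxy']
    · have hlt : x < y := lt_of_le_of_ne hxy hxy'
      show chowDAux ρ g (n + 1) x y = chowDAux ρ g (n + 1 + 1) x y
      simp only [chowDAux, if_neg hxy']
      congr 2
      apply Finset.sum_congr rfl
      intro z hz
      rw [Finset.mem_Ico] at hz
      have h1 : ρ x z < n := by
        have ha := hρadd x z y hz.1 hz.2.le
        have hb := (hρpos z y).mpr hz.2
        omega
      rw [ih x z hz.1 h1]
      simp only [chowDAux]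

include hρpos hρadd in
lemma chowDAux_stable :
    ∀ n : ℕ, ∀ x y : P, x ≤ y → ρ x y < n →
      chowDAux ρ g n x y = chowDAux ρ g (ρ x y + 1) x y := by
  intro n
  induction n with
  | zero => intro x y _ h; omega
  | succ n ih =>
    intro x y hxy h
    rcases Nat.lt_succ_iff_lt_or_eq.mp h with h' | h'
    · rw [← chowDAux_step ρ g hρpos hρadd n x y hxy h', ih x y hxy h']
    · rw [h']

lemma chowD_diag (x : P) : chowD ρ g x x = 1 := by
  simp [chowD, chowDAux]

include hρpos hρadd in
lemma chowD_eq {x y : P} (hlt : x < y) :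
    chowD ρ g x y = X * Spoly (ρ x y - 1) (chowF ρ g x y) := by
  show chowDAux ρ g (ρ x y + 1) x y = _
  simp only [chowDAux, if_neg hlt.ne]
  congr 2
  rw [chowF]
  apply Finset.sum_congr rfl
  intro z hz
  rw [Finset.mem_Ico] at hz
  have h1 : ρ x z < ρ x y := by
    have ha := hρadd x z y hz.1 hz.2.le
    have hb := (hρpos z y).mpr hz.2
    omega
  rw [chowDAux_stable ρ g hρpos hρadd (ρ x y) x z hz.1 h1]
  rfl

lemma chowH_eq {x y : P} (hxy : x ≤ y) :
    chowH ρ g x y = chowD ρ g x y * g y y + chowF ρ g x y := by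
  rw [chowH, chowF, ← Finset.Ico_insert_right hxy,
    Finset.sum_insert (by simp)]

include hρpos in
lemma rho_diag (x : P) : ρ x x = 0 := by
  by_contra h
  exact absurd ((hρpos x x).mp (Nat.pos_of_ne_zero h)) (lt_irrefl x)

variable [IsDomain R]
variable (hg1 : ∀ x : P, g x x = 1)
variable (hgdeg : ∀ x y : P, x < y → 2 * (g x y).natDegree < ρ x y)

include hρpos hρadd hg1 hgdeg in
/-- Main induction: degree bounds, self-reversality of `d`, and the key identity
`(X-1)·d_{x,y} = I(F) - X·F` where `F` is the truncated convolution. -/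
lemma chow_main :
    ∀ N : ℕ, ∀ x y : P, x ≤ y → ρ x y ≤ N →
      (chowD ρ g x y).natDegree ≤ ρ x y ∧
      reflect (ρ x y) (chowD ρ g x y) = chowD ρ g x y ∧
      (x < y → (chowF ρ g x y).natDegree ≤ ρ x y - 1) ∧
      (x < y → (X - C 1) * chowD ρ g x y
        = reflect (ρ x y) (chowF ρ g x y) - X * chowF ρ g x y) := by
  intro N
  induction N with
  | zero =>
    intro x y hxy hN
    have hxy' : x = y := by
      by_contra h
      have := (hρpos x y).mpr (lt_of_le_of_ne hxy h)
      omega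
    subst hxy'
    refine ⟨?_, ?_, fun h => absurd h (lt_irrefl x), fun h => absurd h (lt_irrefl x)⟩
    · rw [chowD_diag]; simp
    · rw [chowD_diag, rho_diag ρ hρpos, ← C_1, reflect_C, pow_zero, mul_one]
  | succ N ih =>
    intro x y hxy hN
    by_cases hxy' : x = y
    · subst hxy'
      refine ⟨?_, ?_, fun h => absurd h (lt_irrefl x), fun h => absurd h (lt_irrefl x)⟩
      · rw [chowD_diag]; simp
      · rw [chowD_diag, rho_diag ρ hρpos, ← C_1, reflect_C, pow_zero, mul_one]
    · have hlt : x < y := lt_of_le_of_ne hxy hxy'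
      set n := ρ x y with hn
      have hn1 : 1 ≤ n := (hρpos x y).mpr hlt
      -- facts about elements of `Ico x y`
      have hzfacts : ∀ z ∈ Finset.Ico x y,
          x ≤ z ∧ z < y ∧ ρ x z + ρ z y = n ∧ 1 ≤ ρ z y := by
        intro z hz
        rw [Finset.mem_Ico] at hz
        exact ⟨hz.1, hz.2, (hρadd x z y hz.1 hz.2.le).symm, (hρpos z y).mpr hz.2⟩
      -- degree bound for F
      have hFdeg : (chowF ρ g x y).natDegree ≤ n - 1 := by
        rw [chowF]
        apply natDegree_sum_le_of_forall_le
        intro z hz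
        obtain ⟨hxz, hzy, hsum, hzy1⟩ := hzfacts z hz
        have hdz : (chowD ρ g x z).natDegree ≤ ρ x z :=
          (ih x z hxz (by omega)).1
        have hgz : (g z y).natDegree ≤ ρ z y - 1 := by
          have := hgdeg z y hzy
          omega
        refine le_trans (natDegree_mul_le) ?_
        omega
      have hFX : reflect n (chowF ρ g x y) = X * reflect (n - 1) (chowF ρ g x y) := by
        have := reflect_succ_of_natDegree_le (n := n - 1) (f := chowF ρ g x y) hFdeg
        rwa [Nat.sub_add_cancel hn1] at this
      have hDeq : chowD ρ g x y = X * Spoly (n - 1) (chowF ρ g x y) :=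
        chowD_eq ρ g hρpos hρadd hlt
      have hkey : (X - C 1) * chowD ρ g x y
          = reflect n (chowF ρ g x y) - X * chowF ρ g x y := by
        calc (X - C 1) * chowD ρ g x y
            = X * ((X - C 1) * Spoly (n - 1) (chowF ρ g x y)) := by rw [hDeq]; ring
          _ = X * (reflect (n - 1) (chowF ρ g x y) - chowF ρ g x y) := by
              rw [spoly_spec]
          _ = reflect n (chowF ρ g x y) - X * chowF ρ g x y := by rw [hFX]; ring
      have hDdeg : (chowD ρ g x y).natDegree ≤ n := by
        rw [hDeq]
        refine le_trans natDegree_mul_le ?_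
        have := natDegree_spoly_le (R := R) (n := n - 1) (f := chowF ρ g x y) hFdeg
        rw [natDegree_X]
        omega
      have hFdeg' : (chowF ρ g x y).natDegree ≤ n := le_trans hFdeg (by omega)
      have hrefl : reflect n (chowD ρ g x y) = chowD ρ g x y := by
        have e1 : reflect (1 + n) ((X - C 1) * chowD ρ g x y)
            = reflect 1 (X - C 1) * reflect n (chowD ρ g x y) :=
          reflect_mul _ _ (le_trans (natDegree_sub_le _ _) (by simp)) hDdeg
        have e2 : reflect 1 (X - C (1 : R)) = 1 - X := by
          rw [reflect_sub', reflect_one_X, reflect_C, pow_one, C_1, one_mul]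
        have e3 : reflect (1 + n) (reflect n (chowF ρ g x y) - X * chowF ρ g x y)
            = X * chowF ρ g x y - reflect n (chowF ρ g x y) := by
          rw [reflect_sub']
          have e4 : reflect (1 + n) (reflect n (chowF ρ g x y))
              = X * chowF ρ g x y := by
            rw [add_comm 1 n,
              reflect_succ_of_natDegree_le (natDegree_reflect_le hFdeg'),
              reflect_reflect]
          have e5 : reflect (1 + n) (X * chowF ρ g x y)
              = reflect n (chowF ρ g x y) := by
            rw [reflect_mul X (chowF ρ g x y) (by simp) hFdeg', reflect_one_X, one_mul]
          rw [e4, e5]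
        have e6 : (1 - X) * reflect n (chowD ρ g x y)
            = X * chowF ρ g x y - reflect n (chowF ρ g x y) := by
          rw [← e2, ← e1, hkey, e3]
        have e7 : (X - C 1) * reflect n (chowD ρ g x y)
            = (X - C 1) * chowD ρ g x y := by
          rw [hkey, C_1]
          linear_combination -e6
        exact mul_left_cancel₀ (X_sub_C_ne_zero (1 : R)) e7
      exact ⟨hDdeg, hrefl, fun _ => hFdeg, fun _ => hkey⟩

include hρpos hρadd hg1 hgdeg in
lemma chowH_props {x y : P} (hxy : x ≤ y) :
    (chowH ρ g x y).natDegree ≤ ρ x y ∧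
    reflect (ρ x y) (chowH ρ g x y)
      = X * chowH ρ g x y + (if x = y then (1 : R[X]) - X else 0) := by
  have hm := chow_main ρ g hρpos hρadd hg1 hgdeg (ρ x y) x y hxy le_rfl
  by_cases hxy' : x = y
  · subst hxy'
    have hH : chowH ρ g x x = 1 := by
      rw [chowH_eq ρ g le_rfl, chowD_diag, hg1, one_mul, chowF]
      simp
    rw [hH, if_pos rfl, rho_diag ρ hρpos]
    constructor
    · simp
    · rw [← C_1, reflect_C, pow_zero, mul_one, C_1]
      ring
  · have hlt : x < y := lt_of_le_of_ne hxy hxy'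
    have hHe : chowH ρ g x y = chowD ρ g x y + chowF ρ g x y := by
      rw [chowH_eq ρ g hxy, hg1, mul_one]
    have hkey := hm.2.2.2 hlt
    have hFdeg := hm.2.2.1 hlt
    constructor
    · rw [hHe]
      refine le_trans (natDegree_add_le _ _) (max_le hm.1 (le_trans hFdeg (by omega)))
    · rw [if_neg hxy', add_zero, hHe, reflect_add, hm.2.1]
      rw [C_1] at hkey
      linear_combination -hkey

include hρpos hρadd hg1 hgdeg in
lemma chow_unique (H' d' : P → P → R[X]) (hpair : ChowPairOn ρ g H' d') :
    ∀ N : ℕ, ∀ x y : P, x ≤ y → ρ x y ≤ N →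
      H' x y = chowH ρ g x y ∧ d' x y = chowD ρ g x y := by
  obtain ⟨hdeg', hdiag', hIH', hId', hconv'⟩ := hpair
  intro N
  induction N with
  | zero =>
    intro x y hxy hN
    have hxy' : x = y := by
      by_contra h
      have := (hρpos x y).mpr (lt_of_le_of_ne hxy h)
      omega
    subst hxy'
    constructor
    · rw [hconv' x x le_rfl, chowH]
      simp [hdiag', chowD_diag]
    · rw [hdiag', chowD_diag]
  | succ N ih =>
    intro x y hxy hN
    by_cases hxy' : x = y
    · subst hxy'
      constructor
      · rw [hconv' x x le_rfl, chowH]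
        simp [hdiag', chowD_diag]
      · rw [hdiag', chowD_diag]
    · have hlt : x < y := lt_of_le_of_ne hxy hxy'
      set n := ρ x y with hn
      have hn1 : 1 ≤ n := (hρpos x y).mpr hlt
      have hF' : (∑ z ∈ Finset.Ico x y, d' x z * g z y) = chowF ρ g x y := by
        rw [chowF]
        apply Finset.sum_congr rfl
        intro z hz
        rw [Finset.mem_Ico] at hz
        have h1 : ρ x z < n := by
          have ha := hρadd x z y hz.1 hz.2.le
          have hb := (hρpos z y).mpr hz.2
          omega
        rw [(ih x z hz.1 (by omega)).2]
      have hH' : H' x y = d' x y + chowF ρ g x y := by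
        rw [hconv' x y hxy, ← Finset.Ico_insert_right hxy,
          Finset.sum_insert (by simp), hg1, mul_one, hF']
      have hIHxy := hIH' x y hxy
      rw [if_neg hxy', add_zero, hH', reflect_add, hId' x y hxy] at hIHxy
      have hkey := (chow_main ρ g hρpos hρadd hg1 hgdeg n x y hxy le_rfl).2.2.2 hlt
      have e7 : (X - C 1) * d' x y = (X - C 1) * chowD ρ g x y := by
        rw [hkey, C_1]
        linear_combination -hIHxy
      have hd : d' x y = chowD ρ g x y :=
        mul_left_cancel₀ (X_sub_C_ne_zero (1 : R)) e7
      constructor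
      · rw [hH', hd, chowH_eq ρ g hxy, hg1, mul_one, add_comm]
      · exact hd

end Poset

end Stmt17Aux

theorem stmt17 {P : Type*} [PartialOrder P] [DecidableEq P] [LocallyFiniteOrder P]
    {R : Type*} [CommRing R] [IsDomain R]
    (ρ : P → P → ℕ)
    (hρpos : ∀ x y : P, 0 < ρ x y ↔ x < y)
    (hρadd : ∀ x z y : P, x ≤ z → z ≤ y → ρ x y = ρ x z + ρ z y)
    (g : P → P → R[X])
    (hg1 : ∀ x : P, g x x = 1)
    (hgdeg : ∀ x y : P, x < y → 2 * (g x y).natDegree < ρ x y) :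
    ∃ H d : P → P → R[X], ChowPairOn ρ g H d ∧
      (∀ H' d' : P → P → R[X], ChowPairOn ρ g H' d' →
        ∀ x y : P, x ≤ y → H' x y = H x y ∧ d' x y = d x y) ∧
      (∀ x y : P, x < y →
        d x y = X * Spoly (ρ x y - 1) (∑ z ∈ Finset.Ico x y, d x z * g z y)) := by
  classical
  refine ⟨Stmt17Aux.chowH ρ g, Stmt17Aux.chowD ρ g, ?_, ?_, ?_⟩
  · refine ⟨?_, ?_, ?_, ?_, ?_⟩
    · intro x y hxy
      exact ⟨(Stmt17Aux.chowH_props ρ g hρpos hρadd hg1 hgdeg hxy).1,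
        (Stmt17Aux.chow_main ρ g hρpos hρadd hg1 hgdeg (ρ x y) x y hxy le_rfl).1⟩
    · intro x
      exact Stmt17Aux.chowD_diag ρ g x
    · intro x y hxy
      exact (Stmt17Aux.chowH_props ρ g hρpos hρadd hg1 hgdeg hxy).2
    · intro x y hxy
      exact (Stmt17Aux.chow_main ρ g hρpos hρadd hg1 hgdeg (ρ x y) x y hxy le_rfl).2.1
    · intro x y hxy
      rfl
  · intro H' d' hpair x y hxy
    exact Stmt17Aux.chow_unique ρ g hρpos hρadd hg1 hgdeg H' d' hpair (ρ x y) x y hxy le_rfl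
  · intro x y hlt
    exact Stmt17Aux.chowD_eq ρ g hρpos hρadd hlt
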